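/- Let the m×n matrix α satisfy conditions (1)–(3) and let 𝒫 = 𝒫_α be the corresponding P-orbit in 𝒜. Then the intersection 𝒜_x ∩ 𝒫 of the variety of x-stable flags with the P-orbit 𝒫 is nonempty if and only if the intersection 𝒜_x^s ∩ 𝒫 of the s-fixed x-stable flags with 𝒫 is nonempty. (Theorem 1(a).) -/

import Mathlib

open Module Submodule

section Aux
variable {K A : Type*} [Field K] [AddCommGroup A] [Module K A] [FiniteDimensional K A]

lemma exists_step_aux (U W : Submodule K A) (h : U < W) :
    ∃ U' : Submodule K A, U ≤ U' ∧ U' ≤ W ∧ finrank K U' = finrank K U + 1 := by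
  obtain ⟨v, hvW, hvU⟩ := SetLike.exists_of_lt h
  have hv0 : v ≠ 0 := fun h0 => hvU (h0 ▸ U.zero_mem)
  refine ⟨U ⊔ span K {v}, le_sup_left, sup_le h.le ((span_le).2 (by simp [hvW])), ?_⟩
  have hdisj : U ⊓ span K {v} = ⊥ := by
    rw [eq_bot_iff]
    rintro w ⟨hwU, hws⟩
    obtain ⟨c, rfl⟩ := mem_span_singleton.1 hws
    rcases eq_or_ne c 0 with rfl | hc
    · simp
    · exact absurd (by simpa [smul_smul, inv_mul_cancel₀ hc] using U.smul_mem c⁻¹ hwU) hvU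
  have h2 := Submodule.finrank_sup_add_finrank_inf_eq U (span K {v})
  rw [hdisj, finrank_bot, finrank_span_singleton hv0] at h2
  omega

open Classical in
noncomputable def stepUp (U W : Submodule K A) : Submodule K A :=
  if h : U < W then (exists_step_aux U W h).choose else U

lemma stepUp_le (U W : Submodule K A) (h : U ≤ W) : U ≤ stepUp U W := by
  unfold stepUp; split_ifs with h'
  · exact (exists_step_aux U W h').choose_spec.1
  · exact le_rfl

lemma stepUp_le_top (U W : Submodule K A) (h : U ≤ W) : stepUp U W ≤ W := by
  unfold stepUp; split_ifs with h'
  · exact (exists_step_aux U W h').choose_spec.2.1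
  · exact h

lemma stepUp_finrank (U W : Submodule K A) (h : U ≤ W) :
    finrank K (stepUp U W) = min (finrank K U + 1) (finrank K W) := by
  by_cases h' : U < W
  · have h1 := (exists_step_aux U W h').choose_spec.2.2
    have h2 : finrank K U < finrank K W := Submodule.finrank_lt_finrank_of_lt h'
    rw [stepUp, dif_pos h', h1]
    omega
  · have hUW : U = W := (h.lt_or_eq).resolve_left h'
    rw [stepUp, dif_neg h', hUW]
    omega

noncomputable def flagFrom (F0 W : Submodule K A) : ℕ → Submodule K A
  | 0 => F0
  | (t+1) => stepUp (flagFrom F0 W t) W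

lemma flagFrom_le_top (F0 W : Submodule K A) (h : F0 ≤ W) : ∀ t, flagFrom F0 W t ≤ W := by
  intro t; induction t with
  | zero => exact h
  | succ t ih => exact stepUp_le_top _ _ ih

lemma flagFrom_mono (F0 W : Submodule K A) (h : F0 ≤ W) : Monotone (flagFrom F0 W) := by
  apply monotone_nat_of_le_succ
  intro t
  exact stepUp_le _ _ (flagFrom_le_top F0 W h t)

lemma flagFrom_base_le (F0 W : Submodule K A) (h : F0 ≤ W) (t : ℕ) : F0 ≤ flagFrom F0 W t :=
  flagFrom_mono F0 W h (Nat.zero_le t)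

lemma flagFrom_finrank (F0 W : Submodule K A) (h : F0 ≤ W) (t : ℕ) :
    finrank K (flagFrom F0 W t) = min (finrank K F0 + t) (finrank K W) := by
  induction t with
  | zero =>
    have : finrank K F0 ≤ finrank K W := Submodule.finrank_mono h
    rw [show flagFrom F0 W 0 = F0 from rfl]
    simp [flagFrom]; omega
  | succ t ih =>
    have h1 : flagFrom F0 W t ≤ W := flagFrom_le_top F0 W h t
    have h2 := stepUp_finrank (flagFrom F0 W t) W h1
    have h3 : finrank K (flagFrom F0 W t) ≤ finrank K W := Submodule.finrank_mono h1
    rw [show flagFrom F0 W (t+1) = stepUp (flagFrom F0 W t) W from rfl]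
    simp only [flagFrom, h2, ih]
    omega


/-- rank of image of a subspace on which `x` is injective -/
lemma finrank_map_of_disjoint (x : Module.End K A) (W : Submodule K A)
    (hd : Disjoint W (LinearMap.ker x)) (U : Submodule K A) (hU : U ≤ W) :
    finrank K (U.map x) = finrank K U := by
  have hinj : Function.Injective (x.domRestrict U) := by
    rw [injective_iff_map_eq_zero]
    intro ⟨v, hv⟩ h0
    have : v ∈ W ⊓ LinearMap.ker x := ⟨hU hv, by simpa using h0⟩
    rw [disjoint_iff.1 hd] at this
    simpa using this
  have hr : LinearMap.range (x.domRestrict U) = U.map x := by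
    ext v; simp [LinearMap.mem_range, Submodule.mem_map]
  have := LinearMap.finrank_range_of_inj hinj
  rw [hr] at this
  simpa using this

noncomputable def chainG (x : Module.End K A) (E : ℕ → Submodule K A) (m : ℕ) :
    ℕ → ℕ → Submodule K A
  | 0, t => flagFrom ⊥ (E m) t
  | (j+1), t =>
      if t ≤ finrank K (E (m - j)) then ((chainG x E m j) t).map x
      else flagFrom (((chainG x E m j) (finrank K (E (m - j)))).map x) (E (m - j - 1))
        (t - finrank K (E (m - j)))

theorem chainG_props (x : Module.End K A) (E : ℕ → Submodule K A) (m : ℕ) (hm : 1 ≤ m)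
    (hEx : ∀ i, 2 ≤ i → i ≤ m → (E i).map x ≤ E (i - 1))
    (hdisj : ∀ i, 2 ≤ i → i ≤ m → Disjoint (E i) (LinearMap.ker x)) :
    ∀ j, j ≤ m - 1 →
      (∀ t, chainG x E m j t ≤ E (m - j)) ∧
      (Monotone (chainG x E m j)) ∧
      (∀ t, finrank K (chainG x E m j t) = min t (finrank K (E (m - j)))) := by
  intro j
  induction j with
  | zero =>
    intro _
    refine ⟨fun t => flagFrom_le_top _ _ bot_le t, flagFrom_mono _ _ bot_le, fun t => ?_⟩
    have := flagFrom_finrank (⊥ : Submodule K A) (E m) bot_le t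
    rw [show chainG x E m 0 t = flagFrom ⊥ (E m) t from rfl]
    simpa [chainG, finrank_bot] using this
  | succ j ih =>
    intro hj
    have hj' : j ≤ m - 1 := by omega
    obtain ⟨ihle, ihmono, ihrank⟩ := ih hj'
    set i := m - j with hi
    have hi2 : 2 ≤ i := by omega
    have him : i ≤ m := by omega
    have hi1 : m - (j+1) = i - 1 := by omega
    set e := finrank K (E i) with he
    -- rank of image of any subspace of E i
    have hrk : ∀ U : Submodule K A, U ≤ E i → finrank K (U.map x) = finrank K U :=
      fun U hU => finrank_map_of_disjoint x (E i) (hdisj i hi2 him) U hU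
    have hEile : (E i).map x ≤ E (i - 1) := hEx i hi2 him
    have hele : e ≤ finrank K (E (i - 1)) := by
      calc e = finrank K ((E i).map x) := (hrk (E i) le_rfl).symm
        _ ≤ finrank K (E (i-1)) := Submodule.finrank_mono hEile
    -- the base submodule
    have hBle : ((chainG x E m j e).map x) ≤ E (i - 1) :=
      le_trans (Submodule.map_mono (ihle e)) hEile
    have hBrk : finrank K ((chainG x E m j e).map x) = e := by
      rw [hrk _ (ihle e), ihrank e]; omega
    have hle : ∀ t, chainG x E m (j+1) t ≤ E (m - (j+1)) := by
      intro t
      rw [hi1]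
      by_cases ht : t ≤ e
      · rw [chainG, if_pos (by rw [← hi, ← he]; exact ht)]
        exact le_trans (Submodule.map_mono (ihle t)) hEile
      · rw [chainG, if_neg (by rw [← hi, ← he]; exact ht)]
        exact flagFrom_le_top _ _ hBle _
    refine ⟨hle, ?_, ?_⟩
    · apply monotone_nat_of_le_succ
      intro t
      by_cases ht1 : t + 1 ≤ e
      · rw [chainG, if_pos (by rw [← hi, ← he]; omega), chainG, if_pos (by rw [← hi, ← he]; exact ht1)]
        exact Submodule.map_mono (ihmono (by omega))
      · by_cases ht : t ≤ e
        · have hte : t = e := by omega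
          rw [chainG, if_pos (by rw [← hi, ← he]; exact ht), chainG, if_neg (by rw [← hi, ← he]; exact ht1), hte]
          exact flagFrom_base_le _ _ hBle _
        · rw [chainG, if_neg (by rw [← hi, ← he]; exact ht), chainG, if_neg (by rw [← hi, ← he]; exact ht1)]
          exact flagFrom_mono _ _ hBle (by omega)
    · intro t
      rw [hi1]
      by_cases ht : t ≤ e
      · rw [chainG, if_pos (by rw [← hi, ← he]; exact ht), hrk _ (ihle t), ihrank t]
        omega
      · rw [chainG, if_neg (by rw [← hi, ← he]; exact ht),
          flagFrom_finrank _ _ hBle, hBrk, ← hi, ← he]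
        omega

theorem chainG_link (x : Module.End K A) (E : ℕ → Submodule K A) (m : ℕ) (hm : 1 ≤ m)
    (hEx : ∀ i, 2 ≤ i → i ≤ m → (E i).map x ≤ E (i - 1))
    (hdisj : ∀ i, 2 ≤ i → i ≤ m → Disjoint (E i) (LinearMap.ker x)) :
    ∀ j, j + 1 ≤ m - 1 → ∀ t, (chainG x E m j t).map x ≤ chainG x E m (j+1) t := by
  intro j hj t
  obtain ⟨ihle, ihmono, ihrank⟩ := chainG_props x E m hm hEx hdisj j (by omega)
  set i := m - j with hi
  set e := finrank K (E i) with he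
  by_cases ht : t ≤ e
  · rw [chainG, if_pos (by rw [← hi, ← he]; exact ht)]
  · rw [chainG, if_neg (by rw [← hi, ← he]; exact ht)]
    have heq : chainG x E m j t = chainG x E m j e := by
      refine (Submodule.eq_of_le_of_finrank_le (ihmono (by omega)) ?_).symm
      rw [ihrank t, ihrank e]; omega
    rw [heq]
    apply flagFrom_base_le
    exact le_trans (Submodule.map_mono (ihle e)) (hEx i (by omega) (by omega))


lemma biSup_Icc_succ (f : ℕ → Submodule K A) (r : ℕ) :
    (⨆ i ∈ Finset.Icc 1 (r+1), f i) = (⨆ i ∈ Finset.Icc 1 r, f i) ⊔ f (r+1) := by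
  rw [← Finset.insert_Icc_right_eq_Icc_add_one (show 1 ≤ r + 1 by omega), Finset.iSup_insert]
  exact sup_comm _ _

theorem exists_flag (x : Module.End K A) (m : ℕ) (hm : 1 ≤ m) (n : ℕ) (k : ℕ → ℕ)
    (s : A ≃ₗ[K] A) (q : Kˣ) (lam0 : Kˣ)
    (E : ℕ → Submodule K A)
    (hEker : ∀ i, i ≤ m → LinearMap.ker (x ^ i) = ⨆ h ∈ Finset.Icc 1 i, E h)
    (hEindep : ∀ i, 1 ≤ i → i ≤ m → Disjoint (E i) (LinearMap.ker (x ^ (i - 1))))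
    (hEx : ∀ i, 2 ≤ i → i ≤ m → (E i).map x ≤ E (i - 1))
    (hEs : ∀ i, 1 ≤ i → i ≤ m → ∀ v ∈ E i, s v = ((lam0 : K) * ((q : K)⁻¹) ^ i) • v)
    (α : ℕ → ℕ → ℕ)
    (l : ℕ → ℕ) (hl : ∀ i, l i = finrank K ↥(LinearMap.ker (x ^ i)))
    (h1a : ∀ i i' j j', 1 ≤ i → i ≤ i' → i' ≤ m → 1 ≤ j → j ≤ j' → j' ≤ n → α i j ≤ α i' j')
    (h1b : ∀ j, 1 ≤ j → j ≤ n → α m j = k j)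
    (h2a : ∀ i i' j j', 2 ≤ i → i ≤ i' → i' ≤ m → 1 ≤ j' → j' ≤ j → j ≤ n →
      α i' j' + α (i - 1) j ≤ α i j + α (i' - 1) j')
    (h2b : ∀ i j, 2 ≤ i → i ≤ m → 1 ≤ j → j ≤ n → α i j ≤ α (i - 1) j + α 1 j)
    (h3a : ∀ i j, 2 ≤ i → i ≤ m → 1 ≤ j → j ≤ n → α i j + l (i - 1) ≤ α (i - 1) j + l i)
    (h3b : ∀ j, 1 ≤ j → j ≤ n → α 1 j ≤ l 1) :
    (∃ V : ℕ → Submodule K A,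
      (∀ j j', 1 ≤ j → j ≤ j' → j' ≤ n → V j ≤ V j') ∧
      (∀ j, 1 ≤ j → j ≤ n → finrank K ↥(V j) = k j) ∧
      (∀ j, 1 ≤ j → j ≤ n → (V j).map x ≤ V j) ∧
      (∀ j, 1 ≤ j → j ≤ n → (V j).map s.toLinearMap = V j) ∧
      (∀ i j, 1 ≤ i → i ≤ m → 1 ≤ j → j ≤ n →
        finrank K ↥(V j ⊓ LinearMap.ker (x ^ i)) = α i j)) := by
  -- kernels of powers are monotone
  have hkerpow : ∀ i p : ℕ, i ≤ p → LinearMap.ker (x ^ i) ≤ LinearMap.ker (x ^ p) := by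
    intro i p hip v hv
    rw [LinearMap.mem_ker] at hv ⊢
    rw [← pow_sub_mul_pow x hip, Module.End.mul_apply, hv, map_zero]
  have hdisj : ∀ i, 2 ≤ i → i ≤ m → Disjoint (E i) (LinearMap.ker x) := by
    intro i h1 h2
    refine (hEindep i (by omega) h2).mono_right ?_
    have h := hkerpow 1 (i-1) (by omega)
    rwa [pow_one] at h
  have hE1 : E 1 = LinearMap.ker x := by
    have h := hEker 1 hm
    rw [pow_one, Finset.Icc_self] at h
    rw [h]; simp
  have hEleker : ∀ i, 1 ≤ i → i ≤ m → E i ≤ LinearMap.ker (x ^ i) := by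
    intro i h1 h2
    rw [hEker i h2]
    exact le_iSup₂ (f := fun h _ => E h) i (Finset.mem_Icc.2 ⟨h1, le_rfl⟩)
  have hl0 : l 0 = 0 := by
    rw [hl, pow_zero]
    simp [Module.End.one_eq_id]
    exact finrank_bot _ _
  have hsupE : ∀ r, 1 ≤ r → r ≤ m →
      LinearMap.ker (x ^ r) = LinearMap.ker (x ^ (r-1)) ⊔ E r := by
    intro r h1 h2
    obtain ⟨r', rfl⟩ : ∃ r', r = r' + 1 := ⟨r - 1, by omega⟩
    rw [hEker _ h2, show r' + 1 - 1 = r' from rfl, hEker r' (by omega), biSup_Icc_succ]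
  have hlrec : ∀ r, 1 ≤ r → r ≤ m → l r = l (r-1) + finrank K (E r) := by
    intro r h1 h2
    have hsum := Submodule.finrank_sup_add_finrank_inf_eq (LinearMap.ker (x ^ (r-1))) (E r)
    have hdis : LinearMap.ker (x ^ (r-1)) ⊓ E r = ⊥ := by
      rw [inf_comm]; exact disjoint_iff.1 (hEindep r h1 h2)
    rw [hdis, finrank_bot, ← hsupE r h1 h2] at hsum
    rw [hl r, hl (r-1)]
    omega
  -- the chain subspaces
  obtain ⟨G, hG⟩ : ∃ G : ℕ → ℕ → Submodule K A, ∀ i t, G i t = chainG x E m (m - i) t :=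
    ⟨_, fun _ _ => rfl⟩
  have hGle : ∀ i, 1 ≤ i → i ≤ m → ∀ t, G i t ≤ E i := by
    intro i h1 h2 t
    have h := (chainG_props x E m hm hEx hdisj (m - i) (by omega)).1 t
    rw [show m - (m - i) = i by omega] at h
    rw [hG]; exact h
  have hGmono : ∀ i, 1 ≤ i → i ≤ m → ∀ t t', t ≤ t' → G i t ≤ G i t' := by
    intro i h1 h2 t t' htt
    rw [hG, hG]
    exact (chainG_props x E m hm hEx hdisj (m - i) (by omega)).2.1 htt
  have hGrank : ∀ i, 1 ≤ i → i ≤ m → ∀ t, finrank K (G i t) = min t (finrank K (E i)) := by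
    intro i h1 h2 t
    have h := (chainG_props x E m hm hEx hdisj (m - i) (by omega)).2.2 t
    rw [show m - (m - i) = i by omega] at h
    rw [hG]; exact h
  have hGlink : ∀ i, 2 ≤ i → i ≤ m → ∀ t, (G i t).map x ≤ G (i-1) t := by
    intro i h1 h2 t
    have h := chainG_link x E m hm hEx hdisj (m - i) (by omega) t
    rw [show m - i + 1 = m - (i - 1) by omega] at h
    rw [hG, hG]; exact h
  -- the jump sequence
  obtain ⟨aa, haa⟩ : ∃ aa : ℕ → ℕ → ℕ,
      ∀ i j, aa i j = if i = 1 then α 1 j else α i j - α (i-1) j := ⟨_, fun _ _ => rfl⟩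
  have habound : ∀ i j, 1 ≤ i → i ≤ m → 1 ≤ j → j ≤ n → aa i j ≤ finrank K (E i) := by
    intro i j h1 h2 h3 h4
    rcases eq_or_lt_of_le h1 with h1' | h1'
    · subst h1'
      rw [haa, if_pos rfl]
      have := h3b j h3 h4
      have h5 := hlrec 1 le_rfl h2
      rw [show (1:ℕ) - 1 = 0 from rfl, hl0] at h5
      omega
    · rw [haa, if_neg (by omega)]
      have := h3a i j (by omega) h2 h3 h4
      have := hlrec i (by omega) h2
      omega
  have hasum : ∀ i j, 2 ≤ i → i ≤ m → 1 ≤ j → j ≤ n → α (i-1) j + aa i j = α i j := by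
    intro i j h1 h2 h3 h4
    rw [haa, if_neg (by omega)]
    have := h1a (i-1) i j j (by omega) (by omega) h2 h3 le_rfl h4
    omega
  have hamono : ∀ i j j', 1 ≤ i → i ≤ m → 1 ≤ j → j ≤ j' → j' ≤ n → aa i j ≤ aa i j' := by
    intro i j j' h1 h2 h3 h4 h5
    rcases eq_or_lt_of_le h1 with h1' | h1'
    · rw [haa, haa, if_pos h1'.symm, if_pos h1'.symm]
      exact h1a 1 1 j j' le_rfl le_rfl hm h3 h4 h5
    · rw [haa, haa, if_neg (by omega), if_neg (by omega)]
      have hq := h2a i i j' j (by omega) le_rfl h2 h3 h4 h5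
      have := h1a (i-1) i j j (by omega) (by omega) h2 h3 le_rfl (by omega)
      have := h1a (i-1) i j' j' (by omega) (by omega) h2 (by omega) le_rfl h5
      omega
  have hadec : ∀ i j, 2 ≤ i → i ≤ m → 1 ≤ j → j ≤ n → aa i j ≤ aa (i-1) j := by
    intro i j h1 h2 h3 h4
    rcases eq_or_lt_of_le h1 with h1' | h1'
    · rw [haa, haa, if_neg (by omega), if_pos (by omega)]
      have := h2b i j h1 h2 h3 h4
      rw [← h1'] at *
      omega
    · rw [haa, haa, if_neg (by omega), if_neg (by omega)]
      have hq := h2a (i-1) i j j (by omega) (by omega) h2 h3 le_rfl h4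
      rw [show i - 1 - 1 = i - 2 by omega] at hq
      have := h1a (i-2) (i-1) j j (by omega) (by omega) (by omega) h3 le_rfl h4
      rw [show i - 1 - 1 = i - 2 by omega]
      omega
  -- the partial sums of chain spaces
  obtain ⟨S, hS⟩ : ∃ S : ℕ → ℕ → Submodule K A,
      ∀ p j, S p j = ⨆ i ∈ Finset.Icc 1 p, G i (aa i j) := ⟨_, fun _ _ => rfl⟩
  have hSsucc : ∀ p j, S (p+1) j = S p j ⊔ G (p+1) (aa (p+1) j) := by
    intro p j; rw [hS, hS, biSup_Icc_succ]
  have hSker : ∀ p, p ≤ m → ∀ j, 1 ≤ j → j ≤ n → S p j ≤ LinearMap.ker (x ^ p) := by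
    intro p hp j h3 h4
    rw [hS]
    refine iSup₂_le fun i hi => ?_
    obtain ⟨hi1, hi2⟩ := Finset.mem_Icc.1 hi
    exact le_trans (hGle i hi1 (by omega) _)
      (le_trans (hEleker i hi1 (by omega)) (hkerpow i p hi2))
  have hSrank0 : ∀ j, finrank K ↥(S 0 j) = 0 := by
    intro j
    rw [hS, show Finset.Icc 1 0 = ∅ from rfl]
    simp
  have hstep : ∀ p j, p + 1 ≤ m → 1 ≤ j → j ≤ n →
      finrank K ↥(S (p+1) j) = finrank K ↥(S p j) + aa (p+1) j := by
    intro p j hp h3 h4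
    have hinf : S p j ⊓ G (p+1) (aa (p+1) j) = ⊥ := by
      rw [eq_bot_iff]
      refine le_trans (inf_le_inf (hSker p (by omega) j h3 h4)
        (hGle (p+1) (by omega) (by omega) _)) ?_
      rw [inf_comm]
      exact (disjoint_iff.1 (hEindep (p+1) (by omega) (by omega))).le
    have hsum := Submodule.finrank_sup_add_finrank_inf_eq (S p j) (G (p+1) (aa (p+1) j))
    rw [hinf, finrank_bot] at hsum
    have hg := hGrank (p+1) (by omega) (by omega) (aa (p+1) j)
    have hb := habound (p+1) j (by omega) (by omega) h3 h4
    rw [hSsucc]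
    omega
  have hSrank : ∀ p, 1 ≤ p → p ≤ m → ∀ j, 1 ≤ j → j ≤ n →
      finrank K ↥(S p j) = α p j := by
    intro p hp1
    induction p, hp1 using Nat.le_induction with
    | base =>
      intro _ j h3 h4
      show finrank K ↥(S (0+1) j) = α (0+1) j
      rw [hstep 0 j (by omega) h3 h4, hSrank0, haa]
      norm_num
    | succ p hp ih =>
      intro hpm j h3 h4
      rw [hstep p j hpm h3 h4, ih (by omega) j h3 h4]
      have := hasum (p+1) j (by omega) hpm h3 h4
      rw [show p+1-1 = p from rfl] at this
      omega
  -- intersection with the kernels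
  have hVcap : ∀ p j, 1 ≤ p → p ≤ m → 1 ≤ j → j ≤ n →
      S m j ⊓ LinearMap.ker (x ^ p) = S p j := by
    intro p j hp1 hp2 h3 h4
    have key : ∀ r, p ≤ r → r ≤ m → S r j ⊓ LinearMap.ker (x ^ p) ≤ S p j := by
      intro r
      induction r with
      | zero => intro h _; interval_cases p <;> simp_all
      | succ r ih =>
        intro hpr hrm
        by_cases hpr' : p = r + 1
        · subst hpr'; exact inf_le_left
        · have h1 : S (r+1) j ⊓ LinearMap.ker (x ^ p) ≤ S r j ⊓ LinearMap.ker (x ^ p) := by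
            refine le_inf ?_ inf_le_right
            refine le_trans (inf_le_inf_left _ (hkerpow p r (by omega))) ?_
            rw [hSsucc, sup_inf_assoc_of_le _ (hSker r (by omega) j h3 h4)]
            have hz : G (r+1) (aa (r+1) j) ⊓ LinearMap.ker (x ^ r) = ⊥ := by
              rw [eq_bot_iff]
              refine le_trans (inf_le_inf_right _ (hGle (r+1) (by omega) (by omega) _)) ?_
              exact (disjoint_iff.1 (hEindep (r+1) (by omega) (by omega))).le
            rw [hz, sup_bot_eq]
          exact le_trans h1 (ih (by omega) (by omega))
    refine le_antisymm (key m hp2 le_rfl) (le_inf ?_ (hSker p hp2 j h3 h4))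
    rw [hS, hS]
    exact iSup₂_le fun i hi => le_iSup₂_of_le i
      (Finset.mem_Icc.2 ⟨(Finset.mem_Icc.1 hi).1, le_trans (Finset.mem_Icc.1 hi).2 hp2⟩) le_rfl
  -- the per-piece s-invariance
  have hpiece : ∀ i, 1 ≤ i → i ≤ m → ∀ t, (G i t).map s.toLinearMap = G i t := by
    intro i h1 h2 t
    have hc : ((lam0 : K) * ((q : K)⁻¹) ^ i) ≠ 0 :=
      mul_ne_zero (Units.ne_zero lam0) (pow_ne_zero _ (inv_ne_zero (Units.ne_zero q)))
    apply le_antisymm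
    · rintro w ⟨v, hv, rfl⟩
      have hvE : v ∈ E i := hGle i h1 h2 _ hv
      simp only [LinearEquiv.coe_coe]
      rw [hEs i h1 h2 v hvE]
      exact Submodule.smul_mem _ _ hv
    · intro v hv
      refine ⟨((lam0 : K) * ((q : K)⁻¹) ^ i)⁻¹ • v, Submodule.smul_mem _ _ hv, ?_⟩
      have hvE : v ∈ E i := hGle i h1 h2 _ hv
      simp only [LinearEquiv.coe_coe, map_smul]
      rw [hEs i h1 h2 v hvE, smul_smul, inv_mul_cancel₀ hc, one_smul]
  -- conclude
  refine ⟨fun j => S m j, ?_, ?_, ?_, ?_, ?_⟩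
  · intro j j' h1 h2 h3
    show S m j ≤ S m j'
    rw [hS, hS]
    refine iSup₂_le fun i hi => le_iSup₂_of_le i hi ?_
    obtain ⟨hi1, hi2⟩ := Finset.mem_Icc.1 hi
    exact hGmono i hi1 hi2 _ _ (hamono i j j' hi1 hi2 h1 h2 h3)
  · intro j h3 h4
    show finrank K ↥(S m j) = k j
    rw [hSrank m hm le_rfl j h3 h4, h1b j h3 h4]
  · intro j h3 h4
    show (S m j).map x ≤ S m j
    rw [hS]
    simp only [Submodule.map_iSup]
    refine iSup₂_le fun i hi => ?_
    obtain ⟨hi1, hi2⟩ := Finset.mem_Icc.1 hi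
    rcases eq_or_lt_of_le hi1 with h1' | h1'
    · rw [← h1']
      intro w hw
      obtain ⟨v, hv, rfl⟩ := hw
      have hvk : v ∈ LinearMap.ker x := hE1 ▸ hGle 1 le_rfl hm _ hv
      rw [LinearMap.mem_ker.1 hvk]
      exact Submodule.zero_mem _
    · refine le_trans (hGlink i (by omega) hi2 _) ?_
      refine le_trans (hGmono (i-1) (by omega) (by omega) _ _
        (hadec i j (by omega) hi2 h3 h4)) ?_
      exact le_iSup₂_of_le (i-1) (Finset.mem_Icc.2 ⟨by omega, by omega⟩) le_rfl
  · intro j h3 h4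
    show (S m j).map s.toLinearMap = S m j
    rw [hS]
    simp only [Submodule.map_iSup]
    refine le_antisymm (iSup₂_le fun i hi => ?_) (iSup₂_le fun i hi => ?_) <;>
      obtain ⟨hi1, hi2⟩ := Finset.mem_Icc.1 hi
    · exact le_iSup₂_of_le i hi (hpiece i hi1 hi2 _).le
    · exact le_iSup₂_of_le i hi (hpiece i hi1 hi2 _).ge
  · intro i j h1 h2 h3 h4
    show finrank K ↥(S m j ⊓ LinearMap.ker (x ^ i)) = α i j
    rw [hVcap i j h1 h2 h3 h4, hSrank i h1 h2 j h3 h4]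

end Aux


/-- **Theorem 1(a).** Let `x` be a nilpotent endomorphism of nilpotent
order `m` of a finite-dimensional vector space `A` over an algebraically closed field `K`
of characteristic zero, and let `s ∈ GL(A)` be a semisimple element of the parabolic `P`
(stabilizing the kernels `ker x^i`) with `s x s⁻¹ = q x`, whose centralizer is a Levi
subgroup of `P`; such an `s` is encoded by the grading `A = E 1 ⊕ … ⊕ E m` it induces,
with `ker x^i = E 1 ⊕ … ⊕ E i`, `x (E i) ⊆ E (i-1)`, and `s` acting on `E i` by the
pairwise distinct scalars `lam0 q⁻ⁱ`.  Let the `m × n` matrix `α` satisfy conditions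
(1)–(3) and let `𝒫 = 𝒫_α` be the corresponding `P`-orbit of the partial flag variety
`𝒜 = F_{k_•}(A)`.  Then `𝒜_x ∩ 𝒫 ≠ ∅` if and only if `𝒜_x^s ∩ 𝒫 ≠ ∅`. -/
theorem theorem_1a
    (K : Type*) [Field K] [IsAlgClosed K] [CharZero K]
    (A : Type*) [AddCommGroup A] [Module K A] [FiniteDimensional K A]
    (x : Module.End K A) (m : ℕ) (hm : 1 ≤ m)
    (hxm : x ^ m = 0) (hxm1 : x ^ (m - 1) ≠ 0)
    (n : ℕ) (d : ℕ) (hd : d = finrank K A)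
    (k : ℕ → ℕ) (hk : ∀ j j', 1 ≤ j → j ≤ j' → j' ≤ n → k j ≤ k j')
    (hkd : ∀ j, 1 ≤ j → j ≤ n → k j ≤ d)
    -- the semisimple element `s`, with `s x s⁻¹ = q x`, encoded through the grading
    (s : A ≃ₗ[K] A) (q : Kˣ) (lam0 : Kˣ)
    (hsx : ∀ v : A, s (x v) = (q : K) • x (s v))
    (E : ℕ → Submodule K A)
    (hEker : ∀ i, i ≤ m → LinearMap.ker (x ^ i) = ⨆ h ∈ Finset.Icc 1 i, E h)
    (hEindep : ∀ i, 1 ≤ i → i ≤ m → Disjoint (E i) (LinearMap.ker (x ^ (i - 1))))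
    (hEx : ∀ i, 2 ≤ i → i ≤ m → (E i).map x ≤ E (i - 1))
    (hEs : ∀ i, 1 ≤ i → i ≤ m → ∀ v ∈ E i, s v = ((lam0 : K) * ((q : K)⁻¹) ^ i) • v)
    (hdist : ∀ i i', 1 ≤ i → i < i' → i' ≤ m →
      (lam0 : K) * ((q : K)⁻¹) ^ i ≠ (lam0 : K) * ((q : K)⁻¹) ^ i')
    -- the matrix `α`, satisfying conditions (1)–(3)
    (α : ℕ → ℕ → ℕ)
    (l : ℕ → ℕ) (hl : ∀ i, l i = finrank K ↥(LinearMap.ker (x ^ i)))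
    (h1a : ∀ i i' j j', 1 ≤ i → i ≤ i' → i' ≤ m → 1 ≤ j → j ≤ j' → j' ≤ n → α i j ≤ α i' j')
    (h1b : ∀ j, 1 ≤ j → j ≤ n → α m j = k j)
    (h2a : ∀ i i' j j', 2 ≤ i → i ≤ i' → i' ≤ m → 1 ≤ j' → j' ≤ j → j ≤ n →
      α i' j' + α (i - 1) j ≤ α i j + α (i' - 1) j')
    (h2b : ∀ i j, 2 ≤ i → i ≤ m → 1 ≤ j → j ≤ n → α i j ≤ α (i - 1) j + α 1 j)
    (h3a : ∀ i j, 2 ≤ i → i ≤ m → 1 ≤ j → j ≤ n → α i j + l (i - 1) ≤ α (i - 1) j + l i)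
    (h3b : ∀ j, 1 ≤ j → j ≤ n → α 1 j ≤ l 1) :
    -- `𝒜_x ∩ 𝒫 ≠ ∅ ↔ 𝒜_x^s ∩ 𝒫 ≠ ∅`
    (∃ V : ℕ → Submodule K A,
      (∀ j j', 1 ≤ j → j ≤ j' → j' ≤ n → V j ≤ V j') ∧
      (∀ j, 1 ≤ j → j ≤ n → finrank K ↥(V j) = k j) ∧
      (∀ j, 1 ≤ j → j ≤ n → (V j).map x ≤ V j) ∧
      (∀ i j, 1 ≤ i → i ≤ m → 1 ≤ j → j ≤ n →
        finrank K ↥(V j ⊓ LinearMap.ker (x ^ i)) = α i j)) ↔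
    (∃ V : ℕ → Submodule K A,
      (∀ j j', 1 ≤ j → j ≤ j' → j' ≤ n → V j ≤ V j') ∧
      (∀ j, 1 ≤ j → j ≤ n → finrank K ↥(V j) = k j) ∧
      (∀ j, 1 ≤ j → j ≤ n → (V j).map x ≤ V j) ∧
      (∀ j, 1 ≤ j → j ≤ n → (V j).map s.toLinearMap = V j) ∧
      (∀ i j, 1 ≤ i → i ≤ m → 1 ≤ j → j ≤ n →
        finrank K ↥(V j ⊓ LinearMap.ker (x ^ i)) = α i j)) := by
  constructor
  · intro _
    exact exists_flag x m hm n k s q lam0 E hEker hEindep hEx hEs α l hl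
      h1a h1b h2a h2b h3a h3b
  · rintro ⟨V, p1, p2, p3, _, p5⟩
    exact ⟨V, p1, p2, p3, p5⟩
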